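/- The double zeta value ζ(4,1) equals 2ζ(5) − ζ(2)ζ(3). -/

import Mathlib

set_option maxHeartbeats 1000000

open Filter Topology

noncomputable def zeta1 (k : ℕ) : ℝ := ∑' n : ℕ+, 1 / (n : ℝ) ^ k

noncomputable def zeta2 (a b : ℕ) : ℝ :=
  ∑' p : {p : ℕ × ℕ // p.2 < p.1 ∧ 0 < p.2},
    1 / ((p.val.1 : ℝ) ^ a * (p.val.2 : ℝ) ^ b)

namespace ZetaAux

abbrev S := {p : ℕ × ℕ // p.2 < p.1 ∧ 0 < p.2}

lemma rpos (n : ℕ+) : (0:ℝ) < ((n:ℕ):ℝ) := by exact_mod_cast n.pos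
lemma rone_le (n : ℕ+) : (1:ℝ) ≤ ((n:ℕ):ℝ) := by exact_mod_cast n.one_le

/-! ### Summability basics -/

lemma summable_pnat {k : ℕ} (hk : 2 ≤ k) : Summable (fun n : ℕ+ => 1/((n:ℕ):ℝ)^k) := by
  have h : Summable (fun n : ℕ => 1/(n:ℝ)^k) :=
    Real.summable_one_div_nat_pow.mpr (by omega)
  exact h.comp_injective (fun a b h => PNat.coe_injective h)

def mr (p : ℕ+ × ℕ+) : ℝ := ((p.1:ℕ):ℝ)
def nr (p : ℕ+ × ℕ+) : ℝ := ((p.2:ℕ):ℝ)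

lemma summable_base : Summable (fun p : ℕ+ × ℕ+ => 1/(mr p)^2 * (1/(nr p)^2)) := by
  have h := summable_pnat (k:=2) le_rfl
  have h0 : ∀ n : ℕ+, 0 ≤ 1/((n:ℕ):ℝ)^2 := fun n => by positivity
  exact h.mul_of_nonneg h h0 h0

/-- master comparison lemma -/
lemma summable_dom {f : ℕ+ × ℕ+ → ℝ} (h0 : ∀ p, 0 ≤ f p)
    (h1 : ∀ p, f p ≤ 1/((mr p)^2 * (nr p)^2)) : Summable f := by
  apply Summable.of_nonneg_of_le h0 _ summable_base
  intro p
  rw [one_div_mul_one_div]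
  exact h1 p

/-! ### The lattice sums -/

noncomputable def Vf (p : ℕ+ × ℕ+) : ℝ := 1/(mr p^3 * nr p * (mr p + nr p))
noncomputable def Wf (p : ℕ+ × ℕ+) : ℝ := 1/(mr p^2 * nr p^2 * (mr p + nr p))
noncomputable def Uf (p : ℕ+ × ℕ+) : ℝ := 1/(mr p^2 * nr p * (mr p + nr p)^2)
noncomputable def Tf (p : ℕ+ × ℕ+) : ℝ := 1/(mr p * nr p * (mr p + nr p)^3)
/-- sums of the form `1/((m+n)^a * n^b)` -/
noncomputable def Zf (a b : ℕ) (p : ℕ+ × ℕ+) : ℝ := 1/((mr p + nr p)^a * nr p^b)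
/-- product-type sums `1/(m^a n^b)` -/
noncomputable def Pf (a b : ℕ) (p : ℕ+ × ℕ+) : ℝ := 1/(mr p^a * nr p^b)

section bounds

lemma mr_pos (p : ℕ+ × ℕ+) : 0 < mr p := rpos p.1
lemma nr_pos (p : ℕ+ × ℕ+) : 0 < nr p := rpos p.2

lemma mr_facts (p : ℕ+ × ℕ+) : 0 < mr p ∧ 0 < nr p ∧ 1 ≤ mr p ∧ 1 ≤ nr p :=
  ⟨rpos p.1, rpos p.2, rone_le p.1, rone_le p.2⟩

lemma summable_Vf : Summable Vf := by
  apply summable_dom (fun p => by unfold Vf mr nr; positivity)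
  intro p
  obtain ⟨h1, h2, h3, h4⟩ := mr_facts p
  unfold Vf
  apply one_div_le_one_div_of_le (by positivity)
  calc mr p^2 * nr p^2 = mr p^2 * nr p * nr p := by ring
  _ ≤ mr p^3 * nr p * (mr p + nr p) := by
      gcongr <;> nlinarith

lemma summable_Wf : Summable Wf := by
  apply summable_dom (fun p => by unfold Wf mr nr; positivity)
  intro p
  obtain ⟨h1, h2, h3, h4⟩ := mr_facts p
  unfold Wf
  apply one_div_le_one_div_of_le (by positivity)
  nlinarith [mul_pos (mul_pos h1 h1) (mul_pos h2 h2)]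

lemma summable_Uf : Summable Uf := by
  apply summable_dom (fun p => by unfold Uf mr nr; positivity)
  intro p
  obtain ⟨h1, h2, h3, h4⟩ := mr_facts p
  unfold Uf
  apply one_div_le_one_div_of_le (by positivity)
  calc mr p^2 * nr p^2 = mr p^2 * nr p * (nr p * 1) := by ring
  _ ≤ mr p^2 * nr p * ((mr p + nr p) * (mr p + nr p)) := by
      gcongr <;> linarith
  _ = mr p^2 * nr p * (mr p + nr p)^2 := by ring

lemma summable_Tf : Summable Tf := by
  apply summable_dom (fun p => by unfold Tf mr nr; positivity)
  intro p
  obtain ⟨h1, h2, h3, h4⟩ := mr_facts p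
  unfold Tf
  apply one_div_le_one_div_of_le (by positivity)
  calc mr p^2 * nr p^2 = mr p * nr p * (mr p * nr p * 1) := by ring
  _ ≤ mr p * nr p * ((mr p + nr p) * (mr p + nr p) * (mr p + nr p)) := by
      gcongr <;> linarith
  _ = mr p * nr p * (mr p + nr p)^3 := by ring

lemma summable_Zf {a b : ℕ} (ha : 2 ≤ a) (hb : 1 ≤ b) (hab : a + b = 5) : Summable (Zf a b) := by
  apply summable_dom (fun p => by unfold Zf mr nr; positivity)
  intro p
  obtain ⟨h1, h2, h3, h4⟩ := mr_facts p
  unfold Zf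
  apply one_div_le_one_div_of_le (by positivity)
  have hcase : a = 2 ∧ b = 3 ∨ a = 3 ∧ b = 2 ∨ a = 4 ∧ b = 1 := by omega
  set x := mr p; set y := nr p
  rcases hcase with ⟨rfl, rfl⟩ | ⟨rfl, rfl⟩ | ⟨rfl, rfl⟩
  · calc x^2 * y^2 = x^2 * (y^2 * 1) := by ring
    _ ≤ (x+y)^2 * (y^2 * y) := by gcongr <;> linarith
    _ = (x+y)^2 * y^3 := by ring
  · calc x^2 * y^2 = x^2 * 1 * y^2 := by ring
    _ ≤ (x+y)^2 * (x+y) * y^2 := by gcongr <;> linarith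
    _ = (x+y)^3 * y^2 := by ring
  · calc x^2 * y^2 = x^2 * (1 * y) * y := by ring
    _ ≤ (x+y)^2 * ((x+y) * (x+y)) * y := by gcongr <;> linarith
    _ = (x+y)^4 * y^1 := by ring

lemma summable_Pf {a b : ℕ} (ha : 2 ≤ a) (hb : 2 ≤ b) : Summable (Pf a b) := by
  have h := (summable_pnat ha).mul_of_nonneg (summable_pnat hb)
    (fun n => by positivity) (fun n => by positivity)
  apply h.congr
  intro p
  unfold Pf mr nr
  rw [one_div_mul_one_div]

end bounds


/-! ### Reindexing equivalences -/

def eS : ℕ+ × ℕ+ ≃ S where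
  toFun p := ⟨((p.1:ℕ) + (p.2:ℕ), (p.2:ℕ)), by
    refine ⟨?_, p.2.pos⟩
    have := p.1.pos; omega⟩
  invFun q := (⟨q.val.1 - q.val.2, by have h1 := q.2.1; omega⟩, ⟨q.val.2, q.2.2⟩)
  left_inv p := by
    obtain ⟨m, n⟩ := p
    refine Prod.ext ?_ ?_ <;> apply PNat.coe_injective <;> simp
  right_inv q := by
    obtain ⟨⟨a, b⟩, h1, h2⟩ := q
    apply Subtype.ext
    refine Prod.ext ?_ rfl
    show (a - b) + b = a
    omega

lemma zeta1_eq (k : ℕ) : zeta1 k = ∑' n : ℕ+, 1/((n:ℕ):ℝ)^k := rfl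

lemma zeta2_eq (a b : ℕ) : zeta2 a b = ∑' p : ℕ+ × ℕ+, Zf a b p := by
  unfold zeta2
  rw [← Equiv.tsum_eq eS (fun q : S => 1 / ((q.val.1 : ℝ) ^ a * (q.val.2 : ℝ) ^ b))]
  apply tsum_congr
  intro p
  show 1 / ((((p.1:ℕ) + (p.2:ℕ) : ℕ):ℝ) ^ a * (((p.2:ℕ)):ℝ) ^ b) = Zf a b p
  unfold Zf mr nr
  push_cast
  ring

lemma swap_tsum (f : ℕ+ × ℕ+ → ℝ) : ∑' p : ℕ+ × ℕ+, f (p.2, p.1) = ∑' p, f p := by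
  rw [← Equiv.tsum_eq (Equiv.prodComm ℕ+ ℕ+) f]
  exact tsum_congr (fun p => rfl)

lemma swap_summable {f : ℕ+ × ℕ+ → ℝ} (h : Summable f) :
    Summable (fun p : ℕ+ × ℕ+ => f (p.2, p.1)) := by
  have h2 := (Equiv.summable_iff (Equiv.prodComm ℕ+ ℕ+) (f := f)).mpr h
  exact h2.congr (fun p => rfl)

lemma zeta2_eq' (a b : ℕ) : zeta2 a b = ∑' p : ℕ+ × ℕ+, Zf a b (p.2, p.1) := by
  rw [swap_tsum (Zf a b), zeta2_eq]

/-! ### Product sums -/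

lemma tsum_Pf {a b : ℕ} (ha : 2 ≤ a) (hb : 2 ≤ b) :
    ∑' p : ℕ+ × ℕ+, Pf a b p = zeta1 a * zeta1 b := by
  have hs := summable_Pf ha hb
  rw [Summable.tsum_prod' hs (fun m => hs.prod_factor m)]
  have inner : ∀ m : ℕ+, ∑' n : ℕ+, Pf a b (m, n)
      = (1/((m:ℕ):ℝ)^a) * ∑' n : ℕ+, 1/((n:ℕ):ℝ)^b := by
    intro m
    rw [← tsum_mul_left]
    apply tsum_congr
    intro n
    unfold Pf mr nr
    rw [one_div_mul_one_div]
  rw [tsum_congr inner, tsum_mul_right, zeta1_eq, zeta1_eq]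

/-! ### Stuffle -/

def eA : S ≃ ↑{p : ℕ+ × ℕ+ | p.2 < p.1} where
  toFun q := ⟨(⟨q.val.1, by have h1 := q.2.1; have h2 := q.2.2; omega⟩, ⟨q.val.2, q.2.2⟩), by
    show (⟨q.val.2, _⟩ : ℕ+) < ⟨q.val.1, _⟩
    rw [PNat.mk_lt_mk]
    exact q.2.1⟩
  invFun r := ⟨((r.val.1 : ℕ), (r.val.2 : ℕ)), ⟨by exact_mod_cast r.2, r.val.2.pos⟩⟩
  left_inv q := by apply Subtype.ext; rfl
  right_inv r := by apply Subtype.ext; rfl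

def eB : S ≃ ↑{p : ℕ+ × ℕ+ | p.1 < p.2} where
  toFun q := ⟨(⟨q.val.2, q.2.2⟩, ⟨q.val.1, by have h1 := q.2.1; have h2 := q.2.2; omega⟩), by
    show (⟨q.val.2, _⟩ : ℕ+) < ⟨q.val.1, _⟩
    rw [PNat.mk_lt_mk]
    exact q.2.1⟩
  invFun r := ⟨((r.val.2 : ℕ), (r.val.1 : ℕ)), ⟨by exact_mod_cast r.2, r.val.1.pos⟩⟩
  left_inv q := by apply Subtype.ext; rfl
  right_inv r := by apply Subtype.ext; rfl

def eC : ℕ+ ≃ ↑{p : ℕ+ × ℕ+ | p.1 = p.2} where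
  toFun k := ⟨(k, k), rfl⟩
  invFun r := r.val.1
  left_inv k := rfl
  right_inv r := by
    apply Subtype.ext
    obtain ⟨⟨a, b⟩, h⟩ := r
    simp only [Set.mem_setOf_eq] at h
    simp [h]

lemma stuffle : zeta1 2 * zeta1 3 = zeta2 2 3 + zeta2 3 2 + zeta1 5 := by
  classical
  have hP : Summable (Pf 2 3) := summable_Pf le_rfl (by norm_num)
  have hdisj1 : Disjoint {p : ℕ+ × ℕ+ | p.1 < p.2} {p : ℕ+ × ℕ+ | p.1 = p.2} := by
    rw [Set.disjoint_left]
    rintro ⟨m, n⟩ h1 h2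
    simp only [Set.mem_setOf_eq] at h1 h2
    rw [h2] at h1
    exact lt_irrefl _ h1
  have hdisj2 : Disjoint {p : ℕ+ × ℕ+ | p.2 < p.1}
      ({p : ℕ+ × ℕ+ | p.1 < p.2} ∪ {p : ℕ+ × ℕ+ | p.1 = p.2}) := by
    rw [Set.disjoint_left]
    rintro ⟨m, n⟩ h1 h2
    simp only [Set.mem_setOf_eq, Set.mem_union] at h1 h2
    rcases h2 with h2 | h2
    · exact lt_irrefl _ (h1.trans h2)
    · rw [h2] at h1; exact lt_irrefl _ h1
  have hcover : {p : ℕ+ × ℕ+ | p.2 < p.1}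
      ∪ ({p : ℕ+ × ℕ+ | p.1 < p.2} ∪ {p : ℕ+ × ℕ+ | p.1 = p.2}) = Set.univ := by
    ext ⟨m, n⟩
    simp only [Set.mem_setOf_eq, Set.mem_union, Set.mem_univ, iff_true]
    rcases lt_trichotomy n m with h | h | h
    · exact Or.inl h
    · exact Or.inr (Or.inr h.symm)
    · exact Or.inr (Or.inl h)
  have pieceA : (∑' p : ↑{p : ℕ+ × ℕ+ | p.2 < p.1}, Pf 2 3 ↑p) = zeta2 2 3 := by
    unfold zeta2
    rw [← Equiv.tsum_eq eA (fun r : ↑{p : ℕ+ × ℕ+ | p.2 < p.1} => Pf 2 3 ↑r)]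
    exact tsum_congr (fun q => rfl)
  have pieceB : (∑' p : ↑{p : ℕ+ × ℕ+ | p.1 < p.2}, Pf 2 3 ↑p) = zeta2 3 2 := by
    unfold zeta2
    rw [← Equiv.tsum_eq eB (fun r : ↑{p : ℕ+ × ℕ+ | p.1 < p.2} => Pf 2 3 ↑r)]
    apply tsum_congr
    intro q
    show (1:ℝ)/((q.val.2:ℝ)^2 * (q.val.1:ℝ)^3) = 1/((q.val.1:ℝ)^3 * (q.val.2:ℝ)^2)
    rw [mul_comm]
  have pieceC : (∑' p : ↑{p : ℕ+ × ℕ+ | p.1 = p.2}, Pf 2 3 ↑p) = zeta1 5 := by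
    rw [zeta1_eq]
    rw [← Equiv.tsum_eq eC (fun r : ↑{p : ℕ+ × ℕ+ | p.1 = p.2} => Pf 2 3 ↑r)]
    apply tsum_congr
    intro k
    show (1:ℝ)/(((k:ℕ):ℝ)^2 * ((k:ℕ):ℝ)^3) = 1/((k:ℕ):ℝ)^5
    rw [← pow_add]
  calc zeta1 2 * zeta1 3 = ∑' p : ℕ+ × ℕ+, Pf 2 3 p := (tsum_Pf le_rfl (by norm_num)).symm
  _ = ∑' p : ↑({p : ℕ+ × ℕ+ | p.2 < p.1}
        ∪ ({p : ℕ+ × ℕ+ | p.1 < p.2} ∪ {p : ℕ+ × ℕ+ | p.1 = p.2})), Pf 2 3 ↑p := by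
      rw [hcover]
      exact (tsum_univ _).symm
  _ = (∑' p : ↑{p : ℕ+ × ℕ+ | p.2 < p.1}, Pf 2 3 ↑p)
      + ((∑' p : ↑{p : ℕ+ × ℕ+ | p.1 < p.2}, Pf 2 3 ↑p)
        + (∑' p : ↑{p : ℕ+ × ℕ+ | p.1 = p.2}, Pf 2 3 ↑p)) := by
      rw [Summable.tsum_union_disjoint hdisj2 (hP.subtype _) (hP.subtype _),
        Summable.tsum_union_disjoint hdisj1 (hP.subtype _) (hP.subtype _)]
  _ = zeta2 2 3 + (zeta2 3 2 + zeta1 5) := by rw [pieceA, pieceB, pieceC]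
  _ = zeta2 2 3 + zeta2 3 2 + zeta1 5 := by ring



/-! ### Harmonic numbers and telescoping -/

noncomputable def Hr (k : ℕ) : ℝ := ∑ j ∈ Finset.range k, 1/((j:ℝ)+1)

lemma Hr_nonneg (k : ℕ) : 0 ≤ Hr k := Finset.sum_nonneg (fun j _ => by positivity)

lemma Hr_le (k : ℕ) : Hr k ≤ k := by
  have h : ∀ j ∈ Finset.range k, 1/((j:ℝ)+1) ≤ 1 := by
    intro j _
    rw [div_le_one (by positivity)]
    have : (0:ℝ) ≤ j := Nat.cast_nonneg j
    linarith
  calc Hr k ≤ ∑ j ∈ Finset.range k, (1:ℝ) := Finset.sum_le_sum h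
  _ = k := by simp

lemma tendsto_inv_shift (j : ℕ) : Tendsto (fun K : ℕ => 1/((K:ℝ)+(j:ℝ)+1)) atTop (𝓝 0) := by
  simp only [one_div]
  apply Filter.Tendsto.inv_tendsto_atTop
  apply Filter.tendsto_atTop_add_const_right
  apply Filter.tendsto_atTop_add_const_right
  exact tendsto_natCast_atTop_atTop

lemma partial_sum (mm : ℕ) (hmm : 0 < mm) (K : ℕ) :
    ∑ i ∈ Finset.range K, 1/(((i:ℝ)+1) * (((i:ℝ)+1) + (mm:ℝ)))
      = (∑ j ∈ Finset.range mm, (1/((j:ℝ)+1) - 1/((K:ℝ)+(j:ℝ)+1))) / (mm:ℝ) := by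
  have hm0 : ((mm:ℝ)) ≠ 0 := by
    have : (0:ℝ) < mm := by exact_mod_cast hmm
    linarith
  induction K with
  | zero => simp
  | succ K ih =>
    rw [Finset.sum_range_succ, ih]
    have tele : ∑ j ∈ Finset.range mm, (1/((K:ℝ)+(j:ℝ)+1) - 1/((K:ℝ)+(j:ℝ)+2))
        = 1/((K:ℝ)+1) - 1/((K:ℝ)+(mm:ℝ)+1) := by
      rw [show (1:ℝ)/((K:ℝ)+1) - 1/((K:ℝ)+(mm:ℝ)+1)
          = (fun j : ℕ => 1/((K:ℝ)+(j:ℝ)+1)) 0 - (fun j : ℕ => 1/((K:ℝ)+(j:ℝ)+1)) mm by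
        norm_num]
      rw [← Finset.sum_range_sub' (f := fun j : ℕ => 1/((K:ℝ)+(j:ℝ)+1))]
      apply Finset.sum_congr rfl
      intro j _
      push_cast
      ring
    have expand : ∑ j ∈ Finset.range mm, (1/((j:ℝ)+1) - 1/(((K+1:ℕ):ℝ)+(j:ℝ)+1))
        = (∑ j ∈ Finset.range mm, (1/((j:ℝ)+1) - 1/((K:ℝ)+(j:ℝ)+1)))
          + (1/((K:ℝ)+1) - 1/((K:ℝ)+(mm:ℝ)+1)) := by
      rw [← tele, ← Finset.sum_add_distrib]
      apply Finset.sum_congr rfl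
      intro j _
      push_cast
      ring
    rw [expand]
    have h1 : ((K:ℝ)+1) ≠ 0 := by positivity
    have h2 : ((K:ℝ)+1+(mm:ℝ)) ≠ 0 := by positivity
    have h3 : ((K:ℝ)+(mm:ℝ)+1) ≠ 0 := by positivity
    field_simp
    ring

lemma hasSum_tele (m : ℕ+) :
    HasSum (fun n : ℕ+ => 1/(((n:ℕ):ℝ) * (((n:ℕ):ℝ) + ((m:ℕ):ℝ))))
      (Hr (m:ℕ) / ((m:ℕ):ℝ)) := by
  rw [← Equiv.hasSum_iff Equiv.pnatEquivNat.symm]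
  have hfe : ((fun n : ℕ+ => 1/(((n:ℕ):ℝ) * (((n:ℕ):ℝ) + ((m:ℕ):ℝ)))) ∘ Equiv.pnatEquivNat.symm)
      = fun i : ℕ => 1/(((i:ℝ)+1) * (((i:ℝ)+1) + ((m:ℕ):ℝ))) := by
    funext i
    simp only [Function.comp_apply, Equiv.pnatEquivNat, Equiv.coe_fn_symm_mk]
    rw [Nat.succPNat_coe]
    push_cast
    ring
  rw [hfe]
  rw [hasSum_iff_tendsto_nat_of_nonneg (fun i => by positivity)]
  have key := partial_sum (m:ℕ) m.pos
  apply Tendsto.congr (fun K => (key K).symm)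
  apply Tendsto.div_const
  have hH : Hr (m:ℕ) = ∑ j ∈ Finset.range (m:ℕ), (1/((j:ℝ)+1) - 0) := by simp [Hr]
  rw [hH]
  apply tendsto_finset_sum
  intro j _
  exact tendsto_const_nhds.sub (tendsto_inv_shift j)

/-! ### Sigma decomposition of zeta2 4 1 -/

def eSig : (Σ m : ℕ+, Fin ((m:ℕ) - 1)) ≃ S where
  toFun x := ⟨((x.1:ℕ), (x.2:ℕ) + 1), by
    have h := x.2.isLt
    exact ⟨by omega, by omega⟩⟩
  invFun q := ⟨⟨q.val.1, by have h1 := q.2.1; have h2 := q.2.2; omega⟩,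
    ⟨q.val.2 - 1, by
      have h1 := q.2.1; have h2 := q.2.2
      show q.val.2 - 1 < q.val.1 - 1
      omega⟩⟩
  left_inv x := by
    obtain ⟨m, j⟩ := x
    refine Sigma.ext rfl ?_
    apply heq_of_eq
    apply Fin.ext
    show ((j:ℕ) + 1) - 1 = (j:ℕ)
    omega
  right_inv q := by
    obtain ⟨⟨a, b⟩, h1, h2⟩ := q
    apply Subtype.ext
    refine Prod.ext rfl ?_
    show (b - 1) + 1 = b
    omega

lemma hsum_S41 : Summable (fun q : S => 1 / ((q.val.1 : ℝ) ^ 4 * (q.val.2 : ℝ) ^ 1)) := by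
  have h := summable_Zf (a:=4) (b:=1) (by norm_num) (by norm_num) (by norm_num)
  apply (Equiv.summable_iff eS).mp
  apply h.congr
  intro p
  show Zf 4 1 p = 1 / ((((p.1:ℕ) + (p.2:ℕ) : ℕ):ℝ) ^ 4 * (((p.2:ℕ)):ℝ) ^ 1)
  unfold Zf mr nr
  push_cast
  ring

lemma zeta2_41_sigma : zeta2 4 1 = ∑' m : ℕ+, Hr ((m:ℕ) - 1) / ((m:ℕ):ℝ)^4 := by
  unfold zeta2
  rw [← Equiv.tsum_eq eSig (fun q : S => 1 / ((q.val.1 : ℝ) ^ 4 * (q.val.2 : ℝ) ^ 1))]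
  have hsig : Summable (fun σ : Σ m : ℕ+, Fin ((m:ℕ)-1) =>
      1 / (((eSig σ).val.1 : ℝ) ^ 4 * ((eSig σ).val.2 : ℝ) ^ 1)) :=
    ((Equiv.summable_iff eSig).mpr hsum_S41).congr (fun _ => rfl)
  rw [Summable.tsum_sigma hsig]
  apply tsum_congr
  intro m
  rw [tsum_fintype]
  calc ∑ j : Fin ((m:ℕ) - 1), 1 / (((m:ℕ):ℝ) ^ 4 * ((((j:ℕ) + 1 : ℕ)):ℝ) ^ 1)
      = ∑ j : Fin ((m:ℕ) - 1), (fun i : ℕ => (1/((i:ℝ)+1)) / ((m:ℕ):ℝ)^4) (j:ℕ) := by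
        apply Finset.sum_congr rfl
        intro j _
        show 1 / (((m:ℕ):ℝ) ^ 4 * ((((j:ℕ) + 1 : ℕ)):ℝ) ^ 1) = (1/(((j:ℕ):ℝ)+1)) / ((m:ℕ):ℝ)^4
        rw [pow_one, div_div]
        push_cast
        rw [mul_comm]
  _ = ∑ i ∈ Finset.range ((m:ℕ) - 1), (1/((i:ℝ)+1)) / ((m:ℕ):ℝ)^4 := by
        rw [← Fin.sum_univ_eq_sum_range]
  _ = Hr ((m:ℕ) - 1) / ((m:ℕ):ℝ)^4 := by
        rw [Hr, Finset.sum_div]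

/-! ### The sum V = ζ(4,1) + ζ(5) -/

lemma eq_A : ∑' p : ℕ+ × ℕ+, Vf p = zeta2 4 1 + zeta1 5 := by
  have hV := summable_Vf
  rw [Summable.tsum_prod' hV (fun m => hV.prod_factor m)]
  have inner : ∀ m : ℕ+, ∑' n : ℕ+, Vf (m, n) = Hr (m:ℕ) / ((m:ℕ):ℝ)^4 := by
    intro m
    have h1 : ∀ n : ℕ+, Vf (m, n)
        = (1/((m:ℕ):ℝ)^3) * (1/(((n:ℕ):ℝ) * (((n:ℕ):ℝ) + ((m:ℕ):ℝ)))) := by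
      intro n
      unfold Vf mr nr
      rw [one_div_mul_one_div]
      congr 1
      ring
    rw [tsum_congr h1, tsum_mul_left, (hasSum_tele m).tsum_eq]
    rw [div_mul_div_comm, one_mul, ← pow_succ]
  rw [tsum_congr inner]
  have splitpt : ∀ m : ℕ+, Hr (m:ℕ) / ((m:ℕ):ℝ)^4
      = Hr ((m:ℕ)-1) / ((m:ℕ):ℝ)^4 + 1/((m:ℕ):ℝ)^5 := by
    intro m
    have hm := rpos m
    have hrec : Hr (m:ℕ) = Hr ((m:ℕ)-1) + 1/((m:ℕ):ℝ) := by
      unfold Hr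
      rw [show (m:ℕ) = ((m:ℕ)-1) + 1 by have := m.pos; omega, Finset.sum_range_succ]
      congr 1
      rw [show ((((m:ℕ)-1 : ℕ)):ℝ) + 1 = ((((m:ℕ)-1)+1 : ℕ):ℝ) by push_cast; ring,
        show ((m:ℕ)-1) + 1 = (m:ℕ) from by have := m.pos; omega]
    rw [hrec, add_div]
    congr 1
    rw [div_div, one_div, one_div]
    congr 1
    ring
  rw [tsum_congr splitpt]
  have hsum1 : Summable (fun m : ℕ+ => Hr ((m:ℕ)-1) / ((m:ℕ):ℝ)^4) := by
    apply Summable.of_nonneg_of_le (fun m => by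
        have := Hr_nonneg ((m:ℕ)-1); have := rpos m; positivity)
      _ (summable_pnat (k:=3) (by norm_num))
    intro m
    have hm := rpos m
    rw [div_le_div_iff₀ (by positivity) (by positivity)]
    have hle : Hr ((m:ℕ)-1) ≤ ((m:ℕ):ℝ) := by
      have h1 := Hr_le ((m:ℕ)-1)
      have h2 : (((m:ℕ)-1 : ℕ):ℝ) ≤ ((m:ℕ):ℝ) := by
        have := m.pos
        rw [Nat.cast_sub m.pos]
        linarith
      linarith
    calc Hr ((m:ℕ)-1) * ((m:ℕ):ℝ)^3 ≤ ((m:ℕ):ℝ) * ((m:ℕ):ℝ)^3 := by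
          apply mul_le_mul_of_nonneg_right hle (by positivity)
    _ = 1 * ((m:ℕ):ℝ)^4 := by ring
  have hsum2 : Summable (fun m : ℕ+ => 1/((m:ℕ):ℝ)^5) := summable_pnat (by norm_num)
  rw [Summable.tsum_add hsum1 hsum2, ← zeta2_41_sigma, zeta1_eq]


/-! ### Pointwise partial fraction identities -/

section identities
variable {x y : ℝ}

lemma idT (hx : 0 < x) (hy : 0 < y) :
    1/(x*y*(x+y)^3) = 1/((x+y)^4*y^1) + 1/((y+x)^4*x^1) := by
  have h : x + y ≠ 0 := by positivity
  field_simp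
  ring

lemma idW (hx : 0 < x) (hy : 0 < y) :
    1/(x^2*y^2*(x+y)) = 1/((x+y)^3*y^2) + 1/((y+x)^3*x^2) + 2*(1/(x*y*(x+y)^3)) := by
  have h : x + y ≠ 0 := by positivity
  field_simp
  ring

lemma idE (hx : 0 < x) (hy : 0 < y) :
    1/(x^3*y*(x+y)) + 1/(x^2*y^2*(x+y)) = 1/(x^3*y^2) := by
  have h : x + y ≠ 0 := by positivity
  field_simp
  ring

lemma idB (hx : 0 < x) (hy : 0 < y) :
    1/(x^3*y*(x+y)) = 1/(x^2*y*(x+y)^2) + 1/((y+x)^2*x^3) := by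
  have h : x + y ≠ 0 := by positivity
  field_simp
  ring

lemma idC (hx : 0 < x) (hy : 0 < y) :
    1/(x^2*y^3) + 1/((x+y)^2*y^3) = 1/(x^2*y*(x+y)^2) + 2*(1/(y^3*x*(y+x))) := by
  have h : x + y ≠ 0 := by positivity
  field_simp
  ring

end identities

/-! ### The linear relations -/

lemma eq_T : ∑' p : ℕ+ × ℕ+, Tf p = 2 * zeta2 4 1 := by
  have hz : Summable (Zf 4 1) := summable_Zf (by norm_num) (by norm_num) (by norm_num)
  have hzs := swap_summable hz
  have hpt : ∀ p : ℕ+ × ℕ+, Tf p = Zf 4 1 p + Zf 4 1 (p.2, p.1) := by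
    intro p
    exact idT (mr_pos p) (nr_pos p)
  rw [tsum_congr hpt, Summable.tsum_add hz hzs, ← zeta2_eq, ← zeta2_eq']
  ring

lemma eq_W : ∑' p : ℕ+ × ℕ+, Wf p = 2 * zeta2 3 2 + 2 * ∑' p : ℕ+ × ℕ+, Tf p := by
  have hz : Summable (Zf 3 2) := summable_Zf (by norm_num) (by norm_num) (by norm_num)
  have hzs := swap_summable hz
  have hpt : ∀ p : ℕ+ × ℕ+, Wf p = Zf 3 2 p + Zf 3 2 (p.2, p.1) + 2 * Tf p := by
    intro p
    exact idW (mr_pos p) (nr_pos p)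
  rw [tsum_congr hpt, Summable.tsum_add (hz.add hzs) (summable_Tf.mul_left 2),
    Summable.tsum_add hz hzs, tsum_mul_left, ← zeta2_eq, ← zeta2_eq']
  ring

lemma eq_E : (∑' p : ℕ+ × ℕ+, Vf p) + ∑' p : ℕ+ × ℕ+, Wf p = zeta1 3 * zeta1 2 := by
  rw [← Summable.tsum_add summable_Vf summable_Wf]
  have hpt : ∀ p : ℕ+ × ℕ+, Vf p + Wf p = Pf 3 2 p := by
    intro p
    exact idE (mr_pos p) (nr_pos p)
  rw [tsum_congr hpt, tsum_Pf (by norm_num) (by norm_num)]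

lemma eq_B : ∑' p : ℕ+ × ℕ+, Vf p = (∑' p : ℕ+ × ℕ+, Uf p) + zeta2 2 3 := by
  have hz : Summable (Zf 2 3) := summable_Zf (by norm_num) (by norm_num) (by norm_num)
  have hzs := swap_summable hz
  have hpt : ∀ p : ℕ+ × ℕ+, Vf p = Uf p + Zf 2 3 (p.2, p.1) := by
    intro p
    exact idB (mr_pos p) (nr_pos p)
  rw [tsum_congr hpt, Summable.tsum_add summable_Uf hzs, ← zeta2_eq']

lemma eq_C : zeta1 2 * zeta1 3 + zeta2 2 3
    = (∑' p : ℕ+ × ℕ+, Uf p) + 2 * ∑' p : ℕ+ × ℕ+, Vf p := by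
  have hz : Summable (Zf 2 3) := summable_Zf (by norm_num) (by norm_num) (by norm_num)
  have hP : Summable (Pf 2 3) := summable_Pf le_rfl (by norm_num)
  have hVs := swap_summable summable_Vf
  have hpt : ∀ p : ℕ+ × ℕ+, Pf 2 3 p + Zf 2 3 p = Uf p + 2 * Vf (p.2, p.1) := by
    intro p
    exact idC (mr_pos p) (nr_pos p)
  rw [← tsum_Pf (a:=2) (b:=3) le_rfl (by norm_num), zeta2_eq 2 3,
    ← Summable.tsum_add hP hz, tsum_congr hpt, Summable.tsum_add summable_Uf (hVs.mul_left 2),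
    tsum_mul_left, swap_tsum]

end ZetaAux

theorem zeta_four_one :
    zeta2 4 1 = 2 * zeta1 5 - zeta1 2 * zeta1 3 := by
  have hA := ZetaAux.eq_A
  have hB := ZetaAux.eq_B
  have hC := ZetaAux.eq_C
  have hE := ZetaAux.eq_E
  have hW := ZetaAux.eq_W
  have hT := ZetaAux.eq_T
  have hS := ZetaAux.stuffle
  have hcomm : zeta1 3 * zeta1 2 = zeta1 2 * zeta1 3 := mul_comm _ _
  linarith
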